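/- arXiv:2504.11179 — 2 statements merged into one kernel-verified Lean document; each statement's English description precedes it below -/
import Mathlib

section
/- Let 𝕂 be a complete algebraically closed nonarchimedean valued field, ψ = ∏_{i=1}^{s}(x - α_i)^e with α_i ∈ 𝕂, and let r ∈ ℚ. Then for any β ∈ 𝕂: v(ψ(β)) ≥ θ_ψ(r) if and only if there exists i with v(β - α_i) ≥ r, where θ_ψ(r) = e·r·|I_r| + e·Σ_{i∈J_r} v(α_1 - α_i) and the multisets of pairwise distances {v(α_j - α_i)}_i are independent of j. -/
section
variable {𝕂 : Type*} [Field 𝕂] (v : 𝕂 → WithTop ℝ)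
    (hv0 : ∀ x : 𝕂, v x = ⊤ ↔ x = 0)
    (hmul : ∀ x y : 𝕂, v (x * y) = v x + v y)

include hv0 hmul

private lemma stmt6_v_one : v 1 = 0 := by
  have h := hmul 1 1
  rw [one_mul] at h
  have hne : v 1 ≠ ⊤ := fun ht => one_ne_zero ((hv0 1).mp ht)
  lift v 1 to ℝ using hne with x hx
  rw [← WithTop.coe_add, WithTop.coe_inj] at h
  norm_cast
  linarith

private lemma stmt6_v_neg (x : 𝕂) : v (-x) = v x := by
  have h1 : v (-1 : 𝕂) = 0 := by
    have h := hmul (-1) (-1)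
    rw [neg_one_mul, neg_neg, stmt6_v_one v hv0 hmul] at h
    have hne : v (-1 : 𝕂) ≠ ⊤ := fun ht => (by norm_num : (-1 : 𝕂) ≠ 0) ((hv0 _).mp ht)
    lift v (-1 : 𝕂) to ℝ using hne with y hy
    rw [← WithTop.coe_add, show (0 : WithTop ℝ) = ((0:ℝ):WithTop ℝ) from rfl,
      WithTop.coe_inj] at h
    rw [show (0 : WithTop ℝ) = ((0:ℝ):WithTop ℝ) from rfl, WithTop.coe_inj]
    linarith
  rw [show -x = (-1) * x by ring, hmul, h1, zero_add]

private lemma stmt6_v_pow (x : 𝕂) (c : ℝ) (hx : v x = (c : WithTop ℝ)) (n : ℕ) :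
    v (x ^ n) = (((n : ℝ) * c : ℝ) : WithTop ℝ) := by
  induction n with
  | zero => simpa using stmt6_v_one v hv0 hmul
  | succ n ih =>
      rw [pow_succ, hmul, ih, hx, ← WithTop.coe_add]
      norm_cast
      push_cast
      ring

private lemma stmt6_v_prod {ι : Type*} (t : Finset ι) (f : ι → 𝕂) :
    v (∏ i ∈ t, f i) = ∑ i ∈ t, v (f i) := by
  classical
  induction t using Finset.cons_induction with
  | empty => simpa using stmt6_v_one v hv0 hmul
  | cons a t ha ih => rw [Finset.prod_cons, Finset.sum_cons, hmul, ih]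

end

open Finset in
private lemma stmt6_core {s : ℕ} [NeZero s] (d : Fin s → Fin s → WithTop ℝ) (b : Fin s → ℝ)
    (r : ℝ)
    (hdd : ∀ j, d j j = ⊤)
    (horb : ∀ j, Finset.univ.val.map (fun i => d j i) = Finset.univ.val.map (fun i => d 0 i))
    (h1 : ∀ j i, min (↑(b j)) (d j i) ≤ (↑(b i) : WithTop ℝ))
    (h2 : ∀ j i, (↑(min (b j) (b i)) : WithTop ℝ) ≤ d j i) :
    r * ((Finset.univ.filter (fun i => ((r : ℝ) : WithTop ℝ) ≤ d 0 i)).card : ℝ)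
      + ∑ i ∈ Finset.univ.filter (fun i => d 0 i < ((r : ℝ) : WithTop ℝ)), (d 0 i).untopD 0
      ≤ ∑ i, b i ↔ ∃ i, r ≤ b i := by
  classical
  -- invariance of card and filtered sum under j
  have cardeq : ∀ j, (Finset.univ.filter (fun i => ((r : ℝ) : WithTop ℝ) ≤ d j i)).card
      = (Finset.univ.filter (fun i => ((r : ℝ) : WithTop ℝ) ≤ d 0 i)).card := by
    intro j
    have h : ∀ (g : Fin s → WithTop ℝ),
        (Finset.univ.filter (fun i => ((r : ℝ) : WithTop ℝ) ≤ g i)).card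
          = Multiset.countP (fun x => ((r : ℝ) : WithTop ℝ) ≤ x) (Finset.univ.val.map g) := by
      intro g
      rw [Multiset.countP_map]
      simp [Finset.card, Finset.filter_val, Multiset.countP_eq_card_filter]
    rw [h, h, horb j]
  have sumeq : ∀ j,
      (∑ i ∈ Finset.univ.filter (fun i => d j i < ((r : ℝ) : WithTop ℝ)), (d j i).untopD 0)
        = ∑ i ∈ Finset.univ.filter (fun i => d 0 i < ((r : ℝ) : WithTop ℝ)), (d 0 i).untopD 0 := by
    intro j
    have h : ∀ (g : Fin s → WithTop ℝ),
        (∑ i ∈ Finset.univ.filter (fun i => g i < ((r : ℝ) : WithTop ℝ)), (g i).untopD 0)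
          = (Multiset.map (fun x => x.untopD 0)
              (Multiset.filter (fun x => x < ((r : ℝ) : WithTop ℝ)) (Finset.univ.val.map g))).sum := by
      intro g
      rw [Finset.sum_eq_multiset_sum, Finset.filter_val, Multiset.filter_map, Multiset.map_map]
      rfl
    rw [h, h, horb j]
  constructor
  · -- hard direction via contrapositive
    intro hle
    by_contra hnot
    push_neg at hnot
    obtain ⟨j, -, hmax⟩ := Finset.exists_max_image Finset.univ b Finset.univ_nonempty
    have hmax' : ∀ i, b i ≤ b j := fun i => hmax i (Finset.mem_univ i)
    rw [← cardeq j, ← sumeq j] at hle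
    set I := Finset.univ.filter (fun i => ((r : ℝ) : WithTop ℝ) ≤ d j i) with hI
    set J := Finset.univ.filter (fun i => d j i < ((r : ℝ) : WithTop ℝ)) with hJ
    have hsplit : ∑ i, b i = ∑ i ∈ I, b i + ∑ i ∈ J, b i := by
      rw [hI, hJ, ← Finset.sum_filter_add_sum_filter_not Finset.univ
        (fun i => ((r : ℝ) : WithTop ℝ) ≤ d j i) b]
      congr 1
      apply Finset.sum_congr _ (fun _ _ => rfl)
      apply Finset.filter_congr
      intro i _
      simp [not_le]
    have hIb : ∑ i ∈ I, b i ≤ (I.card : ℝ) * b j :=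
      le_trans (Finset.sum_le_card_nsmul I b (b j) (fun i _ => hmax' i)) (by rw [nsmul_eq_mul])
    have hJb : ∑ i ∈ J, b i ≤ ∑ i ∈ J, (d j i).untopD 0 := by
      apply Finset.sum_le_sum
      intro i hi
      have hdi : d j i < ((r : ℝ) : WithTop ℝ) := (Finset.mem_filter.mp hi).2
      have hne : d j i ≠ ⊤ := hdi.ne_top
      have h2' := h2 j i
      rw [min_eq_right (hmax' i)] at h2'
      lift d j i to ℝ using hne with x hx
      simpa [WithTop.untopD_coe] using WithTop.coe_le_coe.mp h2'
    have hcard : 1 ≤ I.card := by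
      apply Finset.card_pos.mpr
      exact ⟨j, Finset.mem_filter.mpr ⟨Finset.mem_univ j, by rw [hdd j]; exact le_top⟩⟩
    have hIlt : (I.card : ℝ) * b j < r * (I.card : ℝ) := by
      rw [mul_comm]
      apply mul_lt_mul_of_pos_right (hnot j)
      exact_mod_cast hcard
    have : ∑ i, b i < r * (I.card : ℝ) + ∑ i ∈ J, (d j i).untopD 0 := by
      rw [hsplit]
      exact add_lt_add_of_lt_of_le (lt_of_le_of_lt hIb hIlt) hJb
    exact absurd hle (not_le.mpr this)
  · rintro ⟨j, hrj⟩
    rw [← cardeq j, ← sumeq j]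
    set I := Finset.univ.filter (fun i => ((r : ℝ) : WithTop ℝ) ≤ d j i) with hI
    set J := Finset.univ.filter (fun i => d j i < ((r : ℝ) : WithTop ℝ)) with hJ
    have hsplit : ∑ i, b i = ∑ i ∈ I, b i + ∑ i ∈ J, b i := by
      rw [hI, hJ, ← Finset.sum_filter_add_sum_filter_not Finset.univ
        (fun i => ((r : ℝ) : WithTop ℝ) ≤ d j i) b]
      congr 1
      apply Finset.sum_congr _ (fun _ _ => rfl)
      apply Finset.filter_congr
      intro i _
      simp [not_le]
    have hIb : r * (I.card : ℝ) ≤ ∑ i ∈ I, b i := by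
      rw [mul_comm, ← nsmul_eq_mul]
      apply Finset.card_nsmul_le_sum
      intro i hi
      have hdi : ((r : ℝ) : WithTop ℝ) ≤ d j i := (Finset.mem_filter.mp hi).2
      have := le_trans (le_min (WithTop.coe_le_coe.mpr hrj) hdi) (h1 j i)
      exact_mod_cast this
    have hJb : ∑ i ∈ J, (d j i).untopD 0 ≤ ∑ i ∈ J, b i := by
      apply Finset.sum_le_sum
      intro i hi
      have hdi : d j i < ((r : ℝ) : WithTop ℝ) := (Finset.mem_filter.mp hi).2
      have h1' := h1 j i
      have hlt : d j i < (↑(b j) : WithTop ℝ) := lt_of_lt_of_le hdi (WithTop.coe_le_coe.mpr hrj)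
      rw [min_eq_right hlt.le] at h1'
      have hne : d j i ≠ ⊤ := hdi.ne_top
      lift d j i to ℝ using hne with x hx
      simpa [WithTop.untopD_coe] using WithTop.coe_le_coe.mp h1'
    rw [hsplit]
    exact add_le_add hIb hJb

private lemma stmt6_coe_untop'0 (x : WithTop ℝ) (h : x ≠ ⊤) :
    ((x.untopD 0 : ℝ) : WithTop ℝ) = x := by
  lift x to ℝ using h
  rw [WithTop.untopD_coe]

/-- Splitting of discoids into disks: for `ψ = ∏ᵢ (x - αᵢ)^e` over a complete algebraically
closed nonarchimedean field and `r ∈ ℚ`, a point `β` satisfies `v(ψ(β)) ≥ θ_ψ(r)` if and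
only if `v(β - αᵢ) ≥ r` for some `i`; i.e. `D[ψ, θ_ψ(r)]` is the union of the disks of
radius `r` around the roots of `ψ`. -/
theorem stmt_6 {𝕂 : Type*} [Field 𝕂] [IsAlgClosed 𝕂] (v : 𝕂 → WithTop ℝ)
    (hv0 : ∀ x : 𝕂, v x = ⊤ ↔ x = 0)
    (hmul : ∀ x y : 𝕂, v (x * y) = v x + v y)
    (hadd : ∀ x y : 𝕂, min (v x) (v y) ≤ v (x + y))
    (s e : ℕ) [NeZero s] (he : 0 < e) (α : Fin s → 𝕂)
    (horb : ∀ j : Fin s,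
      Finset.univ.val.map (fun i : Fin s => v (α j - α i)) =
        Finset.univ.val.map (fun i : Fin s => v (α 0 - α i)))
    (r : ℚ) (β : 𝕂) :
    ((e : WithTop ℝ) * (((r : ℝ) : WithTop ℝ)) *
        ((Finset.univ.filter
          (fun i : Fin s => ((r : ℝ) : WithTop ℝ) ≤ v (α 0 - α i))).card : WithTop ℝ)
      + (e : WithTop ℝ) *
        ∑ i ∈ Finset.univ.filter
            (fun i : Fin s => v (α 0 - α i) < ((r : ℝ) : WithTop ℝ)),
          v (α 0 - α i))
      ≤ v (Polynomial.eval β (∏ i, (Polynomial.X - Polynomial.C (α i)) ^ e))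
    ↔ ∃ i : Fin s, ((r : ℝ) : WithTop ℝ) ≤ v (β - α i) := by
  by_cases hβ : ∃ i, β = α i
  · obtain ⟨i0, hi0⟩ := hβ
    have heval : Polynomial.eval β (∏ i, (Polynomial.X - Polynomial.C (α i)) ^ e) = 0 := by
      rw [Polynomial.eval_prod]
      apply Finset.prod_eq_zero (Finset.mem_univ i0)
      simp [hi0, zero_pow he.ne']
    rw [heval, (hv0 0).mpr rfl]
    exact iff_of_true le_top
      ⟨i0, by rw [hi0, sub_self, (hv0 0).mpr rfl]; exact le_top⟩
  · push_neg at hβ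
    have hne : ∀ i, v (β - α i) ≠ ⊤ := fun i h => hβ i (sub_eq_zero.mp ((hv0 _).mp h))
    set b : Fin s → ℝ := fun i => (v (β - α i)).untopD 0 with hbdef
    have hbv : ∀ i, v (β - α i) = ((b i : ℝ) : WithTop ℝ) :=
      fun i => (stmt6_coe_untop'0 _ (hne i)).symm
    set c : Fin s → ℝ := fun i => (v (α 0 - α i)).untopD 0 with hcdef
    have heval : v (Polynomial.eval β (∏ i, (Polynomial.X - Polynomial.C (α i)) ^ e))
        = (((e : ℝ) * ∑ i, b i : ℝ) : WithTop ℝ) := by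
      rw [Polynomial.eval_prod, stmt6_v_prod v hv0 hmul,
        show ((e : ℝ) * ∑ i, b i) = ∑ i, (e : ℝ) * b i from Finset.mul_sum _ _ _,
        WithTop.coe_sum]
      apply Finset.sum_congr rfl
      intro i _
      rw [Polynomial.eval_pow, Polynomial.eval_sub, Polynomial.eval_X, Polynomial.eval_C,
        mul_comm (e : ℝ) (b i)]
      have := stmt6_v_pow v hv0 hmul (β - α i) (b i) (hbv i) e
      rw [this, mul_comm]
    have hsumJ : (∑ i ∈ Finset.univ.filter
          (fun i : Fin s => v (α 0 - α i) < ((r : ℝ) : WithTop ℝ)), v (α 0 - α i))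
        = ((∑ i ∈ Finset.univ.filter
            (fun i : Fin s => v (α 0 - α i) < ((r : ℝ) : WithTop ℝ)), c i : ℝ) : WithTop ℝ) := by
      rw [WithTop.coe_sum]
      apply Finset.sum_congr rfl
      intro i hi
      exact (stmt6_coe_untop'0 _ (Finset.mem_filter.mp hi).2.ne_top).symm
    have hθ : ((e : WithTop ℝ) * (((r : ℝ) : WithTop ℝ)) *
        ((Finset.univ.filter
          (fun i : Fin s => ((r : ℝ) : WithTop ℝ) ≤ v (α 0 - α i))).card : WithTop ℝ)
      + (e : WithTop ℝ) *
        ∑ i ∈ Finset.univ.filter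
            (fun i : Fin s => v (α 0 - α i) < ((r : ℝ) : WithTop ℝ)),
          v (α 0 - α i))
        = ((((e : ℝ) * (r : ℝ) * ((Finset.univ.filter
            (fun i : Fin s => ((r : ℝ) : WithTop ℝ) ≤ v (α 0 - α i))).card : ℝ)
          + (e : ℝ) * ∑ i ∈ Finset.univ.filter
              (fun i : Fin s => v (α 0 - α i) < ((r : ℝ) : WithTop ℝ)), c i : ℝ)) : WithTop ℝ) := by
      rw [hsumJ]
      norm_cast
    rw [hθ, heval, WithTop.coe_le_coe]
    have he' : (0 : ℝ) < (e : ℝ) := by exact_mod_cast he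
    rw [show ((e : ℝ) * (r : ℝ) * ((Finset.univ.filter
            (fun i : Fin s => ((r : ℝ) : WithTop ℝ) ≤ v (α 0 - α i))).card : ℝ)
          + (e : ℝ) * ∑ i ∈ Finset.univ.filter
              (fun i : Fin s => v (α 0 - α i) < ((r : ℝ) : WithTop ℝ)), c i)
        = (e : ℝ) * ((r : ℝ) * ((Finset.univ.filter
            (fun i : Fin s => ((r : ℝ) : WithTop ℝ) ≤ v (α 0 - α i))).card : ℝ)
          + ∑ i ∈ Finset.univ.filter
              (fun i : Fin s => v (α 0 - α i) < ((r : ℝ) : WithTop ℝ)), c i) from by ring,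
      mul_le_mul_iff_right₀ he']
    have hiff : (∃ i : Fin s, ((r : ℝ) : WithTop ℝ) ≤ v (β - α i))
        ↔ ∃ i : Fin s, (r : ℝ) ≤ b i := by
      constructor
      · rintro ⟨i, hi⟩; exact ⟨i, WithTop.coe_le_coe.mp (by rwa [hbv i] at hi)⟩
      · rintro ⟨i, hi⟩; exact ⟨i, by rw [hbv i]; exact_mod_cast hi⟩
    rw [hiff]
    have hdd : ∀ j : Fin s, v (α j - α j) = ⊤ := fun j => by
      rw [sub_self]; exact (hv0 0).mpr rfl
    have h1 : ∀ j i : Fin s, min ((b j : ℝ) : WithTop ℝ) (v (α j - α i))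
        ≤ ((b i : ℝ) : WithTop ℝ) := by
      intro j i
      have h := hadd (β - α j) (α j - α i)
      rw [sub_add_sub_cancel, hbv i, hbv j] at h
      exact h
    have h2 : ∀ j i : Fin s, ((min (b j) (b i) : ℝ) : WithTop ℝ) ≤ v (α j - α i) := by
      intro j i
      have h := hadd (-(β - α j)) (β - α i)
      rw [show -(β - α j) + (β - α i) = α j - α i from by ring,
        stmt6_v_neg v hv0 hmul, hbv i, hbv j] at h
      rw [WithTop.coe_min]
      exact h
    exact stmt6_core (fun j i => v (α j - α i)) b (r : ℝ) hdd horb h1 h2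
end

section
/- Let F = y^3 + A_2 y^2 + A_1 y + A_0 with A_i ∈ K[x], deg A_2 ≤ 2, deg A_1 ≤ 3, deg A_0 ≤ 4, defining a smooth plane quartic via the normal form. If the discriminant Δ_F of F (as a cubic in y, a polynomial in x) has degree 10, then the corresponding point x = ∞ of ℙ¹_K is not a branch point of the degree-3 covering φ : Y → ℙ¹_K obtained by projection. -/
open Polynomial

private lemma cmul' {R : Type*} [Semiring R] {p q : R[X]} {m n k : ℕ}
    (hp : p.natDegree ≤ m) (hq : q.natDegree ≤ n) (h : m + n = k) :
    (p * q).coeff k = p.coeff m * q.coeff n :=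
  h ▸ coeff_mul_add_eq_of_natDegree_le hp hq

private lemma cpow' {R : Type*} [Semiring R] {p : R[X]} {n e k : ℕ}
    (hp : p.natDegree ≤ n) (h : e * n = k) :
    (p ^ e).coeff k = p.coeff n ^ e :=
  h ▸ coeff_pow_of_natDegree_le hp

/-- If the `y`-discriminant of the plane-quartic normal form
`F = y³ + A₂(x)y² + A₁(x)y + A₀(x)` (with `deg A₂ ≤ 2`, `deg A₁ ≤ 3`, `deg A₀ ≤ 4`)
has degree exactly `10`, then `∞` is not a branch point of the degree-3 projection
`φ : Y → ℙ¹`: the fiber of the projective quartic over `∞`, i.e. the projective zero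
locus of the degree-4 homogeneous part
`a₂₂x²y² + a₁₃x³y + a₀₄x⁴` of `F`, consists of exactly three distinct points over the
algebraic closure. -/
theorem stmt_13 {K : Type*} [Field K] (h3 : (3 : K) ≠ 0)
    (A2 A1 A0 : Polynomial K)
    (hA2 : A2.natDegree ≤ 2) (hA1 : A1.natDegree ≤ 3) (hA0 : A0.natDegree ≤ 4)
    (hΔ : (A2 ^ 2 * A1 ^ 2 - 4 * A1 ^ 3 - 4 * A2 ^ 3 * A0 - 27 * A0 ^ 2
      + 18 * A2 * A1 * A0).natDegree = 10) :
    let L := AlgebraicClosure K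
    let H : L × L → L := fun p =>
      algebraMap K L (A2.coeff 2) * p.1 ^ 2 * p.2 ^ 2
        + algebraMap K L (A1.coeff 3) * p.1 ^ 3 * p.2
        + algebraMap K L (A0.coeff 4) * p.1 ^ 4
    ∃ p1 p2 p3 : L × L,
      p1 ≠ 0 ∧ p2 ≠ 0 ∧ p3 ≠ 0 ∧ H p1 = 0 ∧ H p2 = 0 ∧ H p3 = 0 ∧
      (¬∃ c : L, c • p1 = p2) ∧ (¬∃ c : L, c • p1 = p3) ∧ (¬∃ c : L, c • p2 = p3) ∧
      ∀ q : L × L, q ≠ 0 → H q = 0 →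
        (∃ c : L, c • p1 = q) ∨ (∃ c : L, c • p2 = q) ∨ (∃ c : L, c • p3 = q) := by
  intro L H
  have hH : ∀ p : L × L, H p =
      algebraMap K L (A2.coeff 2) * p.1 ^ 2 * p.2 ^ 2
        + algebraMap K L (A1.coeff 3) * p.1 ^ 3 * p.2
        + algebraMap K L (A0.coeff 4) * p.1 ^ 4 := fun p => rfl
  have h4C : (4 : K[X]) = C (4 : K) := (map_ofNat C 4).symm
  have h27C : (27 : K[X]) = C (27 : K) := (map_ofNat C 27).symm
  have h18C : (18 : K[X]) = C (18 : K) := (map_ofNat C 18).symm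
  -- coefficient computation
  have key : (A2 ^ 2 * A1 ^ 2 - 4 * A1 ^ 3 - 4 * A2 ^ 3 * A0 - 27 * A0 ^ 2
      + 18 * A2 * A1 * A0).coeff 10
      = (A2.coeff 2) ^ 2 * (A1.coeff 3) ^ 2 - 4 * ((A2.coeff 2) ^ 3 * A0.coeff 4) := by
    have e1 : (A2 ^ 2 * A1 ^ 2).coeff 10 = (A2.coeff 2) ^ 2 * (A1.coeff 3) ^ 2 := by
      rw [cmul' (natDegree_pow_le_of_le 2 hA2) (natDegree_pow_le_of_le 2 hA1)
          (by norm_num : 2 * 2 + 2 * 3 = 10),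
        cpow' hA2 rfl, cpow' hA1 rfl]
    have e2 : ((4 : K[X]) * A1 ^ 3).coeff 10 = 0 := by
      apply coeff_eq_zero_of_natDegree_lt
      calc ((4 : K[X]) * A1 ^ 3).natDegree ≤ 0 + 3 * 3 :=
            natDegree_mul_le_of_le (by simp [natDegree_ofNat]) (natDegree_pow_le_of_le 3 hA1)
        _ < 10 := by norm_num
    have e3 : ((4 : K[X]) * A2 ^ 3 * A0).coeff 10
        = 4 * ((A2.coeff 2) ^ 3 * A0.coeff 4) := by
      rw [cmul' (p := (4 : K[X]) * A2 ^ 3) (q := A0)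
          (natDegree_mul_le_of_le (by simp [natDegree_ofNat]) (natDegree_pow_le_of_le 3 hA2))
          hA0 (by norm_num : 0 + 3 * 2 + 4 = 10),
        h4C, cmul' (by simp) (natDegree_pow_le_of_le 3 hA2) (by norm_num : 0 + 3 * 2 = 0 + 3 * 2),
        coeff_C_zero, cpow' hA2 rfl]
      ring
    have e4 : ((27 : K[X]) * A0 ^ 2).coeff 10 = 0 := by
      apply coeff_eq_zero_of_natDegree_lt
      calc ((27 : K[X]) * A0 ^ 2).natDegree ≤ 0 + 2 * 4 :=
            natDegree_mul_le_of_le (by simp [natDegree_ofNat]) (natDegree_pow_le_of_le 2 hA0)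
        _ < 10 := by norm_num
    have e5 : ((18 : K[X]) * A2 * A1 * A0).coeff 10 = 0 := by
      apply coeff_eq_zero_of_natDegree_lt
      calc ((18 : K[X]) * A2 * A1 * A0).natDegree ≤ 0 + 2 + 3 + 4 :=
            natDegree_mul_le_of_le (natDegree_mul_le_of_le
              (natDegree_mul_le_of_le (by simp [natDegree_ofNat]) hA2) hA1) hA0
        _ < 10 := by norm_num
    simp only [coeff_add, coeff_sub, e1, e2, e3, e4, e5]
    ring
  -- the leading coefficient is nonzero
  have hne : (A2 ^ 2 * A1 ^ 2 - 4 * A1 ^ 3 - 4 * A2 ^ 3 * A0 - 27 * A0 ^ 2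
      + 18 * A2 * A1 * A0) ≠ 0 := by
    intro h; rw [h] at hΔ; simp at hΔ
  have h10 : (A2 ^ 2 * A1 ^ 2 - 4 * A1 ^ 3 - 4 * A2 ^ 3 * A0 - 27 * A0 ^ 2
      + 18 * A2 * A1 * A0).coeff 10 ≠ 0 := by
    have := leadingCoeff_ne_zero.mpr hne
    rwa [leadingCoeff, hΔ] at this
  rw [key] at h10
  set a : L := algebraMap K L (A2.coeff 2) with ha_def
  set b : L := algebraMap K L (A1.coeff 3) with hb_def
  set c : L := algebraMap K L (A0.coeff 4) with hc_def
  have hL : a ^ 2 * b ^ 2 - 4 * (a ^ 3 * c) ≠ 0 := by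
    rw [ha_def, hb_def, hc_def]
    intro h
    apply h10
    apply (algebraMap K L).injective
    simp only [map_sub, map_mul, map_pow, map_ofNat, map_zero]
    exact h
  have ha : a ≠ 0 := by intro h; apply hL; rw [h]; ring
  have hd : b ^ 2 - 4 * a * c ≠ 0 := by
    intro h; apply hL; linear_combination a ^ 2 * h
  -- find a root of the quadratic a y² + b y + c
  obtain ⟨y1, hy1⟩ := IsAlgClosed.exists_root (k := L) (C a * X ^ 2 + C b * X + C c)
    (by rw [degree_quadratic ha]; decide)
  have hroot1 : a * y1 ^ 2 + b * y1 + c = 0 := by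
    have := hy1; simp [IsRoot, eval_add, eval_mul, eval_pow] at this; linear_combination this
  set y2 : L := -y1 - b / a with hy2_def
  have hsum : a * (y1 + y2) = -b := by rw [hy2_def]; have := mul_div_cancel₀ b ha; linear_combination -this
  have hprod : a * (y1 * y2) = c := by
    linear_combination y1 * hsum - hroot1
  have hne12 : y1 ≠ y2 := by
    intro h
    apply hd
    rw [← h] at hsum hprod
    linear_combination (b - a * (y1 + y1)) * hsum + 4 * a * hprod
  have hfact : ∀ s t : L, a * t ^ 2 + b * s * t + c * s ^ 2
      = a * (t - y1 * s) * (t - y2 * s) := by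
    intro s t
    linear_combination (s * t) * hsum - s ^ 2 * hprod
  have hroot2 : a * y2 ^ 2 + b * y2 + c = 0 := by
    linear_combination hfact 1 y2
  refine ⟨(0, 1), (1, y1), (1, y2), ?_, ?_, ?_, ?_, ?_, ?_, ?_, ?_, ?_, ?_⟩
  · simp [Prod.ext_iff]
  · simp [Prod.ext_iff]
  · simp [Prod.ext_iff]
  · rw [hH]; simp
  · rw [hH]; simp; linear_combination hroot1
  · rw [hH]; simp; linear_combination hroot2
  · rintro ⟨t, ht⟩
    rw [Prod.ext_iff] at ht
    simp [smul_eq_mul] at ht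
  · rintro ⟨t, ht⟩
    rw [Prod.ext_iff] at ht
    simp [smul_eq_mul] at ht
  · rintro ⟨t, ht⟩
    rw [Prod.ext_iff] at ht
    obtain ⟨ht1, ht2⟩ := ht
    simp [smul_eq_mul] at ht1 ht2
    exact hne12 (by rw [← ht2, ht1, one_mul])
  · rintro ⟨x, y⟩ hq0 hqH
    rw [hH] at hqH
    simp only at hqH
    by_cases hx : x = 0
    · subst hx
      have hy : y ≠ 0 := by
        intro h; subst h; exact hq0 rfl
      exact Or.inl ⟨y, by simp [Prod.ext_iff, smul_eq_mul]⟩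
    · have hx2 : x ^ 2 * (a * y ^ 2 + b * x * y + c * x ^ 2) = 0 := by
        linear_combination hqH
      have hq2 : a * y ^ 2 + b * x * y + c * x ^ 2 = 0 :=
        (mul_eq_zero.mp hx2).resolve_left (pow_ne_zero 2 hx)
      rw [hfact x y] at hq2
      rcases mul_eq_zero.mp hq2 with h | h
      · rcases mul_eq_zero.mp h with h | h
        · exact absurd h ha
        · refine Or.inr (Or.inl ⟨x, ?_⟩)
          rw [Prod.ext_iff]
          constructor
          · simp [smul_eq_mul]
          · simp [smul_eq_mul]; linear_combination -h
      · refine Or.inr (Or.inr ⟨x, ?_⟩)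
        rw [Prod.ext_iff]
        constructor
        · simp [smul_eq_mul]
        · simp [smul_eq_mul]; linear_combination -h
end
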